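/- Let G be a simple, undirected, connected graph with finite vertex set and let k be a positive integer. Let u, v, x, z1, z2 be vertices such that d(u,z1) = d(v,z1) + 1, d(u,z2) = d(v,z2) + 1, d(x,z1) ≤ k, d(x,z2) ≤ k, and (as integers) d(x,z1) − d(v,z1) ≠ d(x,z2) − d(v,z2). Then z1 k-distinguishes x and u, or z2 k-distinguishes x and u; i.e., d_k(x,z1) ≠ d_k(u,z1) or d_k(x,z2) ≠ d_k(u,z2). -/
import Mathlib

/-- The `k`-truncated distance: `min (d u v) (k+1)`. -/
noncomputable def truncDist {V : Type*} (G : SimpleGraph V) (k : ℕ) (u v : V) : ℕ :=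
  min (G.dist u v) (k + 1)

theorem distinguish_parent {V : Type*} [Fintype V] (G : SimpleGraph V)
    (hG : G.Connected) (k : ℕ) (hk : 0 < k) (u v x z₁ z₂ : V)
    (h1 : G.dist u z₁ = G.dist v z₁ + 1) (h2 : G.dist u z₂ = G.dist v z₂ + 1)
    (h3 : G.dist x z₁ ≤ k) (h4 : G.dist x z₂ ≤ k)
    (h5 : (G.dist x z₁ : ℤ) - (G.dist v z₁ : ℤ) ≠ (G.dist x z₂ : ℤ) - (G.dist v z₂ : ℤ)) :
    truncDist G k x z₁ ≠ truncDist G k u z₁ ∨ truncDist G k x z₂ ≠ truncDist G k u z₂ := by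
  by_contra h
  push_neg at h
  obtain ⟨e1, e2⟩ := h
  apply h5
  unfold truncDist at e1 e2
  rw [min_eq_left (h3.trans (Nat.le_succ k))] at e1
  rw [min_eq_left (h4.trans (Nat.le_succ k))] at e2
  have a1 : G.dist x z₁ = G.dist v z₁ + 1 := by omega
  have a2 : G.dist x z₂ = G.dist v z₂ + 1 := by omega
  rw [a1, a2]; push_cast; ring
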